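/- In the free group F_2 = ⟨α, β⟩, the element α^m β^n with m, n ≥ 2 is not primitive. -/
import Mathlib


universe u

/-- `w` is a *primitive* element of the subgroup `H`: it is a member of some free basis of `H`. -/
def IsPrimitiveIn {F : Type u} [Group F] (H : Subgroup F) (w : F) : Prop :=
  ∃ (S : Type u) (b : FreeGroupBasis S H) (i : S), (b i : F) = w

/-- `w` is a primitive element of the group `F`: it is a member of some free basis of `F`. -/
def IsPrimitive {F : Type u} [Group F] (w : F) : Prop :=
  ∃ (S : Type u) (b : FreeGroupBasis S F) (i : S), b i = w

/-- The imprimitivity rank of `w`: the minimal rank of a finitely generated subgroup of `F`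
containing `w` in which `w` is not primitive, or `∞` if no such subgroup exists. -/
noncomputable def irank {F : Type u} [Group F] (w : F) : ℕ∞ :=
  sInf {n : ℕ∞ | ∃ m : ℕ, n = (m : ℕ∞) ∧ ∃ H : Subgroup F,
    Nonempty (FreeGroupBasis (Fin m) H) ∧ w ∈ H ∧ ¬ IsPrimitiveIn H w}

/- ### Auxiliary permutations -/

/-- A permutation of `ZMod n × ZMod m` of order dividing `m`. -/
def permX (m n : ℕ) : Equiv.Perm (ZMod n × ZMod m) where
  toFun p := (p.1, p.2 + if p.1 = 0 then 1 else 0)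
  invFun p := (p.1, p.2 - if p.1 = 0 then 1 else 0)
  left_inv p := by simp
  right_inv p := by simp

/-- A permutation of `ZMod n × ZMod m` of order dividing `n`. -/
def permY (m n : ℕ) : Equiv.Perm (ZMod n × ZMod m) where
  toFun p := (p.1 + 1, p.2)
  invFun p := (p.1 - 1, p.2)
  left_inv p := by simp
  right_inv p := by simp

lemma permX_pow (m n k : ℕ) (p : ZMod n × ZMod m) :
    ((permX m n) ^ k) p = (p.1, p.2 + if p.1 = 0 then (k : ZMod m) else 0) := by
  induction k with
  | zero => simp
  | succ k ih =>
    rw [pow_succ', Equiv.Perm.mul_apply, ih]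
    by_cases h : p.1 = 0 <;> simp [permX, h] <;> push_cast <;> ring

lemma permY_pow (m n k : ℕ) (p : ZMod n × ZMod m) :
    ((permY m n) ^ k) p = (p.1 + (k : ZMod n), p.2) := by
  induction k with
  | zero => simp
  | succ k ih =>
    rw [pow_succ', Equiv.Perm.mul_apply, ih]
    simp only [permY, Equiv.coe_fn_mk]
    push_cast
    ring_nf

lemma permX_pow_self (m n : ℕ) : (permX m n) ^ m = 1 := by
  ext p
  · simp [permX_pow, ZMod.natCast_self]
  · simp [permX_pow, ZMod.natCast_self]

lemma permY_pow_self (m n : ℕ) : (permY m n) ^ n = 1 := by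
  ext p
  · simp [permY_pow, ZMod.natCast_self]
  · simp [permY_pow, ZMod.natCast_self]

lemma permXY_not_comm {m n : ℕ} (hm : 2 ≤ m) (hn : 2 ≤ n) :
    permX m n * permY m n ≠ permY m n * permX m n := by
  haveI : Fact (1 < m) := ⟨hm⟩
  haveI : Fact (1 < n) := ⟨hn⟩
  intro h
  have h0 := congrArg (fun e : Equiv.Perm (ZMod n × ZMod m) => e ((0 : ZMod n), (0 : ZMod m))) h
  simp only [Equiv.Perm.mul_apply, permX, permY, Equiv.coe_fn_mk] at h0
  rw [Prod.ext_iff] at h0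
  simp only [zero_add, if_pos rfl] at h0
  rcases h0 with ⟨-, h2⟩
  rw [if_neg (one_ne_zero (α := ZMod n))] at h2
  exact (one_ne_zero (α := ZMod m)) h2.symm

/-- The range of a free group basis generates the group. -/
lemma FreeGroupBasis.closure_range' {S : Type*} {G : Type*} [Group G]
    (c : FreeGroupBasis S G) : Subgroup.closure (Set.range ⇑c) = ⊤ := by
  have hrange : Set.range ⇑c = ⇑c.repr.symm '' Set.range (FreeGroup.of (α := S)) := by
    ext g
    constructor
    · rintro ⟨s, rfl⟩
      exact ⟨FreeGroup.of s, ⟨s, rfl⟩, by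
        have := c.repr_apply_coe s
        exact (MulEquiv.symm_apply_eq c.repr).2 this.symm⟩
    · rintro ⟨-, ⟨s, rfl⟩, rfl⟩
      refine ⟨s, ?_⟩
      have := c.repr_apply_coe s
      exact ((MulEquiv.symm_apply_eq c.repr).2 this.symm).symm
  rw [hrange, show ⇑c.repr.symm = ⇑c.repr.symm.toMonoidHom from rfl,
    ← MonoidHom.map_closure, FreeGroup.closure_range_of]
  exact Subgroup.map_top_of_surjective _ c.repr.symm.surjective

/-- In the free group `F₂ = ⟨α, β⟩`, the element `α^m β^n` with `m, n ≥ 2` is not primitive. -/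
theorem not_primitive_am_bn (m n : ℕ) (hm : 2 ≤ m) (hn : 2 ≤ n) :
    ¬ IsPrimitive ((FreeGroup.of 0 : FreeGroup (Fin 2)) ^ m * (FreeGroup.of 1) ^ n) := by
  classical
  rintro ⟨S, b, i, hbi⟩
  set w : FreeGroup (Fin 2) := (FreeGroup.of 0 : FreeGroup (Fin 2)) ^ m * (FreeGroup.of 1) ^ n
    with hw
  -- Step 1: `S` has exactly two elements.
  let M := Multiplicative (ZMod 2)
  let E : (S → M) ≃ (Fin 2 → M) := b.lift.trans FreeGroup.lift.symm
  have hfinfun : Finite (S → M) := Finite.of_equiv _ E.symm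
  have hSfin : Finite S := by
    refine Finite.of_injective
      (fun s : S => (fun t : S => if t = s then (Multiplicative.ofAdd (1 : ZMod 2)) else 1)) ?_
    intro s s' h
    by_contra hne
    have := congrFun h s
    simp only [if_pos rfl, if_neg hne] at this
    exact (by decide : (Multiplicative.ofAdd (1 : ZMod 2)) ≠ 1) this
  haveI := Fintype.ofFinite S
  have hcard : Fintype.card S = 2 := by
    have h1 : Fintype.card (S → M) = Fintype.card (Fin 2 → M) := Fintype.card_congr E
    rw [Fintype.card_fun, Fintype.card_fun] at h1
    have hM : Fintype.card M = 2 := by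
      rw [show Fintype.card M = Fintype.card (ZMod 2) from Fintype.card_congr (by exact Equiv.refl _)]
      rfl
    rw [hM, Fintype.card_fin] at h1
    exact Nat.pow_right_injective le_rfl h1
  let e2 : S ≃ Fin 2 := Fintype.equivFinOfCardEq hcard
  -- reindexed basis over `Fin 2`
  let c : FreeGroupBasis (Fin 2) (FreeGroup (Fin 2)) := b.reindex e2
  let i' : Fin 2 := e2 i
  have hci' : c i' = w := by
    show b (e2.symm (e2 i)) = w
    rw [Equiv.symm_apply_apply]
    exact hbi
  -- Step 2: the homomorphism to a nonabelian group killing w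
  let x := permX m n
  let y := permY m n
  let φ : FreeGroup (Fin 2) →* Equiv.Perm (ZMod n × ZMod m) := FreeGroup.lift ![x, y]
  have hφ0 : φ (FreeGroup.of 0) = x := FreeGroup.lift_apply_of
  have hφ1 : φ (FreeGroup.of 1) = y := FreeGroup.lift_apply_of
  have hφw : φ w = 1 := by
    rw [hw, map_mul, map_pow, map_pow, hφ0, hφ1]
    show permX m n ^ m * permY m n ^ n = 1
    rw [permX_pow_self, permY_pow_self, one_mul]
  -- Step 3: everything is a power of φ (c (i'+1))
  set g : FreeGroup (Fin 2) := c (i' + 1) with hg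
  have hsub : Set.range ⇑c ⊆ {w, g} := by
    rintro - ⟨s, rfl⟩
    have hs : s = i' ∨ s = i' + 1 := by
      have h2 : ∀ a t : Fin 2, t = a ∨ t = a + 1 := by decide
      exact h2 i' s
    rcases hs with rfl | rfl
    · left; exact hci'
    · right; rfl
  have htop : (⊤ : Subgroup (FreeGroup (Fin 2))) ≤ Subgroup.closure {w, g} := by
    rw [← c.closure_range']
    exact Subgroup.closure_mono hsub
  have hle : Subgroup.closure {w, g} ≤ (Subgroup.zpowers (φ g)).comap φ := by
    refine (Subgroup.closure_le _).2 ?_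
    rintro z (rfl | rfl)
    · exact Subgroup.mem_comap.2 (by rw [hφw]; exact one_mem _)
    · exact Subgroup.mem_comap.2 (Subgroup.mem_zpowers _)
  have key : ∀ z : FreeGroup (Fin 2), φ z ∈ Subgroup.zpowers (φ g) := fun z =>
    hle (htop (Subgroup.mem_top z))
  obtain ⟨k, hk⟩ := key (FreeGroup.of 0)
  obtain ⟨l, hl⟩ := key (FreeGroup.of 1)
  rw [hφ0] at hk
  rw [hφ1] at hl
  have : x * y = y * x := by
    rw [← hk, ← hl, ← zpow_add, ← zpow_add, add_comm]
  exact permXY_not_comm hm hn this
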